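/- arXiv:2412.04401 — 2 statements merged into one kernel-verified Lean document; each statement's English description precedes it below -/
import Mathlib

section
/- Let K be a compact Hausdorff Gruenhage space. Then there exist open sets Rₙ ⊆ K and families 𝒰ₙ of open subsets of K (n ∈ ℕ) with Rₙ ⊆ U for all U ∈ 𝒰ₙ, U ∩ V = Rₙ for distinct U, V ∈ 𝒰ₙ, and ⋃_{n∈ℕ} 𝒰ₙ separating points of K, which additionally have the following uniqueness property: whenever μ and ν are finite Borel measures on K that are inner regular with respect to compact sets (Radon) and satisfy μ(K) = ν(K) and μ(U) = ν(U) for every U ∈ ⋃_{n∈ℕ} 𝒰ₙ, then μ = ν. -/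
open MeasureTheory Set
open scoped ENNReal NNReal

set_option linter.unusedSectionVars false
set_option maxHeartbeats 1000000

/-- A topological space is *Gruenhage*. -/
def IsGruenhage (X : Type*) [TopologicalSpace X] : Prop :=
  ∃ 𝒰 : ℕ → Set (Set X),
    (∀ n, ∀ U ∈ 𝒰 n, IsOpen U) ∧
    ∀ x y : X, x ≠ y →
      ∃ n, (∃ U ∈ 𝒰 n, Xor' (x ∈ U) (y ∈ U)) ∧
        ({U ∈ 𝒰 n | x ∈ U}.Finite ∨ {U ∈ 𝒰 n | y ∈ U}.Finite)

namespace Gru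

variable {K : Type*} [TopologicalSpace K]

variable (𝒰 : ℕ → Set (Set K))

/-- finite nonempty intersections of members of the levels in `s`. -/
def lev (s : Finset ℕ) : Set (Set K) :=
  {G | ∃ F : Finset (Set K), (F : Set (Set K)) ⊆ (⋃ n ∈ s, 𝒰 n) ∧ F.Nonempty ∧
    G = ⋂₀ (F : Set (Set K))}

/-- trace of a point on a level. -/
def tr (s : Finset ℕ) (x : K) : Set (Set K) := {G | G ∈ lev 𝒰 s ∧ x ∈ G}

/-- points lying in at least `k+1` members of `lev s`. -/
def RR (s : Finset ℕ) (k : ℕ) : Set K :=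
  ⋃₀ {A | ∃ H : Finset (Set K), (H : Set (Set K)) ⊆ lev 𝒰 s ∧ H.card = k + 1 ∧
    A = ⋂₀ (H : Set (Set K))}

def WW (s : Finset ℕ) (k : ℕ) (H : Finset (Set K)) : Set K :=
  ⋂₀ (H : Set (Set K)) ∪ RR 𝒰 s k

def fam (s : Finset ℕ) (k : ℕ) : Set (Set K) :=
  insert (RR 𝒰 s k)
    {A | ∃ H : Finset (Set K), (H : Set (Set K)) ⊆ lev 𝒰 s ∧ H.card = k ∧ A = WW 𝒰 s k H}

def TT (s : Finset ℕ) (H : Finset (Set K)) : Set K :=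
  ⋂₀ (H : Set (Set K)) \ RR 𝒰 s H.card

def Rinf (s : Finset ℕ) : Set K := {x | (tr 𝒰 s x).Infinite}

variable {𝒰}

lemma tr_subset_lev {s : Finset ℕ} {x : K} : tr 𝒰 s x ⊆ lev 𝒰 s := fun _ h => h.1

lemma mem_of_mem_tr {s : Finset ℕ} {x : K} {G : Set K} (h : G ∈ tr 𝒰 s x) : x ∈ G := h.2

lemma singleton_mem_lev {n : ℕ} {s : Finset ℕ} {U : Set K} (hn : n ∈ s) (hU : U ∈ 𝒰 n) :
    U ∈ lev 𝒰 s := by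
  refine ⟨{U}, ?_, Finset.singleton_nonempty U, by simp⟩
  intro V hV
  simp only [Finset.coe_singleton, mem_singleton_iff] at hV
  subst hV
  exact mem_iUnion₂.2 ⟨n, hn, hU⟩

lemma lev_mono {s s' : Finset ℕ} (h : s ⊆ s') : lev 𝒰 s ⊆ lev 𝒰 s' := by
  rintro G ⟨F, hF, hne, rfl⟩
  refine ⟨F, hF.trans ?_, hne, rfl⟩
  exact Set.biUnion_subset_biUnion_left (by exact_mod_cast h)

lemma isOpen_mem_lev (h𝒰 : ∀ n, ∀ U ∈ 𝒰 n, IsOpen U) {s : Finset ℕ} {G : Set K}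
    (hG : G ∈ lev 𝒰 s) : IsOpen G := by
  obtain ⟨F, hF, -, rfl⟩ := hG
  refine Set.Finite.isOpen_sInter (F.finite_toSet) ?_
  intro t ht
  obtain ⟨n, -, hn⟩ := mem_iUnion₂.1 (hF ht)
  exact h𝒰 n t hn

lemma isOpen_RR (h𝒰 : ∀ n, ∀ U ∈ 𝒰 n, IsOpen U) {s : Finset ℕ} {k : ℕ} :
    IsOpen (RR 𝒰 s k) := by
  refine isOpen_sUnion ?_
  rintro A ⟨H, hH, -, rfl⟩
  exact Set.Finite.isOpen_sInter H.finite_toSet fun t ht => isOpen_mem_lev h𝒰 (hH ht)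

lemma isOpen_WW (h𝒰 : ∀ n, ∀ U ∈ 𝒰 n, IsOpen U) {s : Finset ℕ} {k : ℕ} {H : Finset (Set K)}
    (hH : (H : Set (Set K)) ⊆ lev 𝒰 s) : IsOpen (WW 𝒰 s k H) := by
  refine IsOpen.union ?_ (isOpen_RR h𝒰)
  exact Set.Finite.isOpen_sInter H.finite_toSet fun t ht => isOpen_mem_lev h𝒰 (hH ht)

lemma mem_RR {s : Finset ℕ} {k : ℕ} {x : K} :
    x ∈ RR 𝒰 s k ↔ ∃ H : Finset (Set K), (H : Set (Set K)) ⊆ tr 𝒰 s x ∧ H.card = k + 1 := by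
  constructor
  · rintro ⟨A, ⟨H, hH, hcard, rfl⟩, hx⟩
    exact ⟨H, fun G hG => ⟨hH hG, (mem_sInter.mp hx) G hG⟩, hcard⟩
  · rintro ⟨H, hH, hcard⟩
    refine ⟨⋂₀ (H : Set (Set K)), ⟨H, fun G hG => (hH hG).1, hcard, rfl⟩, ?_⟩
    exact mem_sInter.mpr fun G hG => (hH hG).2

lemma sInter_subset_RR {s : Finset ℕ} {k : ℕ} {H H' : Finset (Set K)}
    (hH : (H : Set (Set K)) ⊆ lev 𝒰 s) (hH' : (H' : Set (Set K)) ⊆ lev 𝒰 s)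
    (hcH : H.card = k) (hcH' : H'.card = k) (hne : H ≠ H') :
    ⋂₀ (H : Set (Set K)) ∩ ⋂₀ (H' : Set (Set K)) ⊆ RR 𝒰 s k := by
  classical
  intro z hz
  have hsub : H ⊆ H ∪ H' := Finset.subset_union_left
  have hlt : k + 1 ≤ (H ∪ H').card := by
    rcases lt_or_eq_of_le (Finset.card_le_card hsub) with h | h
    · omega
    · exfalso
      have : H = H ∪ H' := Finset.eq_of_subset_of_card_le hsub (le_of_eq h.symm)
      have : H' ⊆ H := by rw [this]; exact Finset.subset_union_right
      exact hne (Finset.eq_of_subset_of_card_le this (by omega)).symm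
  obtain ⟨G, hGsub, hGcard⟩ := Finset.exists_subset_card_eq hlt
  refine mem_RR.2 ⟨G, ?_, hGcard⟩
  intro A hA
  have hA' : A ∈ H ∪ H' := hGsub hA
  rcases Finset.mem_union.1 hA' with h | h
  · exact ⟨hH h, hz.1 A h⟩
  · exact ⟨hH' h, hz.2 A h⟩

/-- the pairwise intersection property. -/
lemma fam_inter {s : Finset ℕ} {k : ℕ} {U V : Set K}
    (hU : U ∈ fam 𝒰 s k) (hV : V ∈ fam 𝒰 s k) (hne : U ≠ V) :
    U ∩ V = RR 𝒰 s k := by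
  have hRsub : ∀ {A}, A ∈ fam 𝒰 s k → RR 𝒰 s k ⊆ A := by
    rintro A (rfl | ⟨H, _, _, rfl⟩)
    · exact subset_rfl
    · exact subset_union_right
  rcases hU with rfl | ⟨H, hH, hcH, rfl⟩
  · exact subset_antisymm (inter_subset_left) (subset_inter subset_rfl (hRsub hV))
  rcases hV with rfl | ⟨H', hH', hcH', rfl⟩
  · exact subset_antisymm (inter_subset_right)
      (subset_inter (hRsub (Or.inr ⟨H, hH, hcH, rfl⟩)) subset_rfl)
  · have hHne : H ≠ H' := by rintro rfl; exact hne rfl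
    apply subset_antisymm
    · rintro z ⟨hz1, hz2⟩
      rcases hz1 with hz1 | hz1
      · rcases hz2 with hz2 | hz2
        · exact sInter_subset_RR hH hH' hcH hcH' hHne ⟨hz1, hz2⟩
        · exact hz2
      · exact hz1
    · intro z hz
      exact ⟨Or.inr hz, Or.inr hz⟩


lemma TT_eq_diff {s : Finset ℕ} {H : Finset (Set K)} :
    TT 𝒰 s H = WW 𝒰 s H.card H \ RR 𝒰 s H.card := by
  ext x
  simp only [TT, WW, mem_diff, mem_union]
  tauto

lemma RR_subset_WW {s : Finset ℕ} {k : ℕ} {H : Finset (Set K)} :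
    RR 𝒰 s k ⊆ WW 𝒰 s k H := subset_union_right

lemma WW_mem_fam {s : Finset ℕ} {k : ℕ} {H : Finset (Set K)}
    (hH : (H : Set (Set K)) ⊆ lev 𝒰 s) (hc : H.card = k) : WW 𝒰 s k H ∈ fam 𝒰 s k :=
  Or.inr ⟨H, hH, hc, rfl⟩

lemma RR_mem_fam {s : Finset ℕ} {k : ℕ} : RR 𝒰 s k ∈ fam 𝒰 s k := Or.inl rfl

lemma mem_TT {s : Finset ℕ} {H : Finset (Set K)} {x : K}
    (hH : (H : Set (Set K)) ⊆ lev 𝒰 s) :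
    x ∈ TT 𝒰 s H ↔ tr 𝒰 s x = (H : Set (Set K)) := by
  classical
  constructor
  · rintro ⟨hx1, hx2⟩
    apply subset_antisymm
    · intro G hG
      by_contra hGH
      apply hx2
      refine mem_RR.2 ⟨insert G H, ?_, ?_⟩
      · intro A hA
        rcases Finset.mem_insert.1 hA with rfl | hA
        · exact hG
        · exact ⟨hH hA, mem_sInter.mp hx1 A hA⟩
      · rw [Finset.card_insert_of_notMem (by exact_mod_cast hGH)]
    · intro G hG
      exact ⟨hH hG, mem_sInter.mp hx1 G hG⟩
  · intro htr
    constructor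
    · exact mem_sInter.mpr fun G hG => (htr ▸ hG : G ∈ tr 𝒰 s x).2
    · intro hx
      obtain ⟨H', hH', hcard⟩ := mem_RR.1 hx
      rw [htr] at hH'
      have : H' ⊆ H := by exact_mod_cast hH'
      have := Finset.card_le_card this
      omega

lemma TT_disjoint {s : Finset ℕ} {H H' : Finset (Set K)}
    (hH : (H : Set (Set K)) ⊆ lev 𝒰 s) (hH' : (H' : Set (Set K)) ⊆ lev 𝒰 s)
    (hne : H ≠ H') : Disjoint (TT 𝒰 s H) (TT 𝒰 s H') := by
  rw [Set.disjoint_left]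
  intro x hx hx'
  have h1 := (mem_TT hH).1 hx
  have h2 := (mem_TT hH').1 hx'
  exact hne (Finset.coe_injective (h1 ▸ h2))

/-- existence of finite subsets of any cardinality. -/
lemma exists_finset_subset_iff {T : Set (Set K)} {m : ℕ} :
    (∃ H : Finset (Set K), (H : Set (Set K)) ⊆ T ∧ H.card = m) ↔
      (T.Infinite ∨ m ≤ T.ncard) := by
  classical
  constructor
  · rintro ⟨H, hHT, rfl⟩
    by_cases hT : T.Infinite
    · exact Or.inl hT
    · refine Or.inr ?_
      rw [← Set.ncard_coe_finset]
      exact Set.ncard_le_ncard hHT (Set.not_infinite.1 hT)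
  · rintro (hT | hm)
    · obtain ⟨t, ht, hc⟩ := hT.exists_subset_card_eq m
      exact ⟨t, ht, hc⟩
    · by_cases hT : T.Finite
      · have hm' : m ≤ hT.toFinset.card := by
          rwa [Set.ncard_eq_toFinset_card T hT] at hm
        obtain ⟨H, hH, hc⟩ := Finset.exists_subset_card_eq hm'
        refine ⟨H, ?_, hc⟩
        intro a ha
        exact hT.mem_toFinset.1 (hH (by exact_mod_cast ha))
      · have hT' : T.Infinite := fun h => hT h
        obtain ⟨t, ht, hc⟩ := hT'.exists_subset_card_eq m
        exact ⟨t, ht, hc⟩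

/-- membership in `RR` via trace size. -/
lemma mem_RR_iff_card {s : Finset ℕ} {k : ℕ} {x : K} :
    x ∈ RR 𝒰 s k ↔ ((tr 𝒰 s x).Infinite ∨ k + 1 ≤ (tr 𝒰 s x).ncard) := by
  rw [mem_RR, exists_finset_subset_iff]

/-- the set of points with trace of size exactly `k`. -/
def SZ (𝒰 : ℕ → Set (Set K)) (s : Finset ℕ) (k : ℕ) : Set K :=
  {x | (tr 𝒰 s x).Finite ∧ (tr 𝒰 s x).ncard = k}

lemma SZ_eq_zero {s : Finset ℕ} : SZ 𝒰 s 0 = univ \ RR 𝒰 s 0 := by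
  ext x
  simp only [SZ, mem_setOf_eq, mem_diff, mem_univ, true_and, mem_RR_iff_card]
  constructor
  · rintro ⟨h1, h2⟩
    push_neg
    refine ⟨h1, by omega⟩
  · intro h
    push_neg at h
    obtain ⟨h1, h2⟩ := h
    have hfin : (tr 𝒰 s x).Finite := by
      by_contra hc
      exact hc h1
    exact ⟨hfin, by omega⟩

lemma SZ_eq_succ {s : Finset ℕ} {k : ℕ} : SZ 𝒰 s (k + 1) = RR 𝒰 s k \ RR 𝒰 s (k + 1) := by
  ext x
  simp only [SZ, mem_setOf_eq, mem_diff, mem_RR_iff_card]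
  constructor
  · rintro ⟨h1, h2⟩
    refine ⟨Or.inr (by omega), ?_⟩
    push_neg
    exact ⟨h1, by omega⟩
  · rintro ⟨h1, h2⟩
    push_neg at h2
    obtain ⟨h2a, h2b⟩ := h2
    have hfin : (tr 𝒰 s x).Finite := by
      by_contra hc
      exact hc h2a
    rcases h1 with h1 | h1
    · exact absurd hfin h1
    · exact ⟨hfin, by omega⟩

lemma mem_SZ_iff_TT {s : Finset ℕ} {k : ℕ} {x : K} :
    x ∈ SZ 𝒰 s k ↔ ∃ H : Finset (Set K), (H : Set (Set K)) ⊆ lev 𝒰 s ∧ H.card = k ∧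
      x ∈ TT 𝒰 s H := by
  classical
  constructor
  · rintro ⟨h1, h2⟩
    refine ⟨h1.toFinset, ?_, ?_, ?_⟩
    · intro G hG
      have : G ∈ tr 𝒰 s x := by rwa [← h1.mem_toFinset, ← Finset.mem_coe]
      exact this.1
    · rw [← h2, Set.ncard_eq_toFinset_card (tr 𝒰 s x) h1]
    · rw [mem_TT]
      · simp [Set.Finite.coe_toFinset]
      · intro G hG
        have : G ∈ tr 𝒰 s x := by rwa [← h1.mem_toFinset, ← Finset.mem_coe]
        exact this.1
  · rintro ⟨H, hH, hc, hx⟩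
    have := (mem_TT hH).1 hx
    constructor
    · rw [this]; exact H.finite_toSet
    · rw [this, Set.ncard_coe_finset, hc]

lemma TT_subset_SZ {s : Finset ℕ} {H : Finset (Set K)}
    (hH : (H : Set (Set K)) ⊆ lev 𝒰 s) : TT 𝒰 s H ⊆ SZ 𝒰 s H.card := by
  intro x hx
  exact mem_SZ_iff_TT.2 ⟨H, hH, rfl, hx⟩

lemma SZ_disjoint {s : Finset ℕ} {k k' : ℕ} (h : k ≠ k') :
    Disjoint (SZ 𝒰 s k) (SZ 𝒰 s k') := by
  rw [Set.disjoint_left]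
  rintro x ⟨h1, h2⟩ ⟨h3, h4⟩
  exact h (h2 ▸ h4)

lemma compl_Rinf_eq {s : Finset ℕ} : univ \ Rinf 𝒰 s = ⋃ k, SZ 𝒰 s k := by
  ext x
  simp only [Rinf, mem_diff, mem_univ, true_and, mem_setOf_eq, mem_iUnion, SZ]
  constructor
  · intro h
    have hfin : (tr 𝒰 s x).Finite := by
      by_contra hc
      exact h (fun hh => hc hh)
    exact ⟨_, hfin, rfl⟩
  · rintro ⟨k, h1, h2⟩ h3
    exact h3 h1

/-- restriction of traces to smaller levels. -/
lemma tr_restrict {n : ℕ} {s : Finset ℕ} (hn : n ∈ s) (x : K) :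
    tr 𝒰 {n} x = tr 𝒰 s x ∩ lev 𝒰 {n} := by
  ext G
  simp only [tr, mem_setOf_eq, mem_inter_iff]
  constructor
  · rintro ⟨h1, h2⟩
    exact ⟨⟨lev_mono (Finset.singleton_subset_iff.2 hn) h1, h2⟩, h1⟩
  · rintro ⟨⟨h1, h2⟩, h3⟩
    exact ⟨h3, h2⟩

lemma base_subset_tr {n : ℕ} {x : K} :
    {U | U ∈ 𝒰 n ∧ x ∈ U} ⊆ tr 𝒰 {n} x := by
  rintro U ⟨hU, hx⟩
  exact ⟨singleton_mem_lev (Finset.mem_singleton_self n) hU, hx⟩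

lemma tr_finite_of_base {s : Finset ℕ} {x : K}
    (h : ({U | U ∈ (⋃ n ∈ s, 𝒰 n) ∧ x ∈ U} : Set (Set K)).Finite) :
    (tr 𝒰 s x).Finite := by
  classical
  set B := {U | U ∈ (⋃ n ∈ s, 𝒰 n) ∧ x ∈ U} with hB
  have himg : tr 𝒰 s x ⊆
      (fun F : Finset (Set K) => ⋂₀ (F : Set (Set K))) '' {F | (F : Set (Set K)) ⊆ B} := by
    rintro G ⟨⟨F, hF, hne, rfl⟩, hx⟩
    refine ⟨F, ?_, rfl⟩
    intro U hU
    exact ⟨hF hU, mem_sInter.mp hx U hU⟩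
  have hfin : ({F : Finset (Set K) | (F : Set (Set K)) ⊆ B}).Finite := by
    have heq : {F : Finset (Set K) | (F : Set (Set K)) ⊆ B} =
        (fun F : Finset (Set K) => (F : Set (Set K))) ⁻¹' {t : Set (Set K) | t ⊆ B} := rfl
    rw [heq]
    apply Set.Finite.preimage
    · intro a _ b _ hab
      exact Finset.coe_injective hab
    · exact h.finite_subsets
  exact (hfin.image _).subset himg

lemma tr_single_finite {n : ℕ} {x : K} (h : ({U | U ∈ 𝒰 n ∧ x ∈ U}).Finite) :
    (tr 𝒰 {n} x).Finite := by
  apply tr_finite_of_base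
  apply h.subset
  rintro U ⟨hU, hx⟩
  obtain ⟨m, hm, h'⟩ := mem_iUnion₂.1 hU
  simp only [Finset.mem_singleton] at hm
  subst hm
  exact ⟨h', hx⟩

lemma tr_finite_union {s : Finset ℕ} {x : K}
    (h : ∀ n ∈ s, (tr 𝒰 {n} x).Finite) : (tr 𝒰 s x).Finite := by
  apply tr_finite_of_base
  have hsub : {U | U ∈ (⋃ n ∈ s, 𝒰 n) ∧ x ∈ U} ⊆ ⋃ n ∈ s, {U | U ∈ 𝒰 n ∧ x ∈ U} := by
    rintro U ⟨hU, hx⟩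
    obtain ⟨n, hn, h'⟩ := mem_iUnion₂.1 hU
    exact mem_iUnion₂.2 ⟨n, hn, h', hx⟩
  refine Set.Finite.subset ?_ hsub
  exact Set.Finite.biUnion s.finite_toSet (fun n hn => (h n hn).subset base_subset_tr)

/-- index type for fibers. -/
def Idx (𝒰 : ℕ → Set (Set K)) (s : Finset ℕ) (k : ℕ) :=
  {H : Finset (Set K) // (H : Set (Set K)) ⊆ lev 𝒰 s ∧ H.card = k}

section Meas

variable [MeasurableSpace K] [BorelSpace K]
variable (h𝒰 : ∀ n, ∀ U ∈ 𝒰 n, IsOpen U)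

include h𝒰

lemma measurableSet_RR {s : Finset ℕ} {k : ℕ} : MeasurableSet (RR 𝒰 s k) :=
  (isOpen_RR h𝒰).measurableSet

lemma measurableSet_sInterF {s : Finset ℕ} {H : Finset (Set K)}
    (hH : (H : Set (Set K)) ⊆ lev 𝒰 s) : MeasurableSet (⋂₀ (H : Set (Set K))) :=
  (Set.Finite.isOpen_sInter H.finite_toSet fun t ht => isOpen_mem_lev h𝒰 (hH ht)).measurableSet

lemma measurableSet_TT {s : Finset ℕ} {H : Finset (Set K)}
    (hH : (H : Set (Set K)) ⊆ lev 𝒰 s) : MeasurableSet (TT 𝒰 s H) :=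
  (measurableSet_sInterF h𝒰 hH).diff (measurableSet_RR h𝒰)

lemma measurableSet_WW {s : Finset ℕ} {k : ℕ} {H : Finset (Set K)}
    (hH : (H : Set (Set K)) ⊆ lev 𝒰 s) : MeasurableSet (WW 𝒰 s k H) :=
  (measurableSet_sInterF h𝒰 hH).union (measurableSet_RR h𝒰)

lemma measurableSet_SZ {s : Finset ℕ} {k : ℕ} : MeasurableSet (SZ 𝒰 s k) := by
  cases k with
  | zero => rw [SZ_eq_zero]; exact MeasurableSet.univ.diff (measurableSet_RR h𝒰)
  | succ k => rw [SZ_eq_succ]; exact (measurableSet_RR h𝒰).diff (measurableSet_RR h𝒰)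

lemma measurableSet_Rinf {s : Finset ℕ} : MeasurableSet (Rinf 𝒰 s) := by
  have : Rinf 𝒰 s = univ \ (univ \ Rinf 𝒰 s) := by simp [Set.diff_diff_right]
  rw [this, compl_Rinf_eq]
  exact MeasurableSet.univ.diff (MeasurableSet.iUnion fun k => measurableSet_SZ h𝒰)

/-- The key inner-regularity summation lemma: a measurable set consisting of points of
trace size exactly `k` has measure the sum of its fiber pieces. -/
lemma sumA (μ : Measure K) [IsFiniteMeasure μ] [hreg : μ.InnerRegular]
    [T2Space K]
    {s : Finset ℕ} {k : ℕ} {X : Set K} (hXm : MeasurableSet X) (hX : X ⊆ SZ 𝒰 s k) :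
    μ X = ∑' H : Idx 𝒰 s k, μ (X ∩ TT 𝒰 s H.1) := by
  classical
  have hmemTT : ∀ z ∈ X, ∀ i : Idx 𝒰 s k, z ∈ ⋂₀ (i.1 : Set (Set K)) → z ∈ TT 𝒰 s i.1 := by
    intro z hz i hzi
    obtain ⟨hfin, hcard⟩ := hX hz
    have hsub : (i.1 : Set (Set K)) ⊆ tr 𝒰 s z := by
      intro G hG
      exact ⟨i.2.1 hG, mem_sInter.mp hzi G hG⟩
    have : (i.1 : Set (Set K)) = tr 𝒰 s z := by
      apply Set.eq_of_subset_of_ncard_le hsub _ hfin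
      rw [Set.ncard_coe_finset, i.2.2, hcard]
    exact (mem_TT i.2.1).2 this.symm
  apply le_antisymm
  · by_contra hlt
    push_neg at hlt
    obtain ⟨C, hCX, hCcomp, hCgt⟩ := hXm.exists_lt_isCompact hlt
    have hcover : C ⊆ ⋃ i : Idx 𝒰 s k, ⋂₀ ((i.1 : Set (Set K))) := by
      intro z hz
      obtain ⟨H, hH, hc, hzT⟩ := mem_SZ_iff_TT.1 (hX (hCX hz))
      exact mem_iUnion.2 ⟨⟨H, hH, hc⟩, hzT.1⟩
    obtain ⟨t, ht⟩ := hCcomp.elim_finite_subcover _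
      (fun i : Idx 𝒰 s k => Set.Finite.isOpen_sInter i.1.finite_toSet
        (fun u hu => isOpen_mem_lev h𝒰 (i.2.1 hu))) hcover
    have hC2 : C ⊆ ⋃ i ∈ t, X ∩ TT 𝒰 s i.1 := by
      intro z hz
      obtain ⟨i, hit, hzi⟩ := mem_iUnion₂.1 (ht hz)
      exact mem_iUnion₂.2 ⟨i, hit, hCX hz, hmemTT z (hCX hz) i hzi⟩
    have : μ C ≤ ∑ i ∈ t, μ (X ∩ TT 𝒰 s i.1) :=
      le_trans (measure_mono hC2) (measure_biUnion_finset_le t _)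
    exact absurd (lt_of_lt_of_le hCgt (this.trans (ENNReal.sum_le_tsum t))) (lt_irrefl _)
  · rw [ENNReal.tsum_eq_iSup_sum]
    refine iSup_le fun t => ?_
    have hdisj : (t : Set (Idx 𝒰 s k)).PairwiseDisjoint
        (fun i : Idx 𝒰 s k => X ∩ TT 𝒰 s i.1) := by
      intro i _ j _ hij
      have : i.1 ≠ j.1 := fun h => hij (Subtype.ext h)
      exact Disjoint.mono inter_subset_right inter_subset_right
        (TT_disjoint i.2.1 j.2.1 this)
    rw [← measure_biUnion_finset hdisj
      (fun i _ => hXm.inter (measurableSet_TT h𝒰 i.2.1))]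
    exact measure_mono (iUnion₂_subset fun i _ => inter_subset_left)

/-- The summation lemma for a general measurable set off the infinite-trace part. -/
lemma sumA2 (μ : Measure K) [IsFiniteMeasure μ] [μ.InnerRegular] [T2Space K]
    {s : Finset ℕ} {E : Set K} (hEm : MeasurableSet E) :
    μ (E \ Rinf 𝒰 s) = ∑' k : ℕ, ∑' H : Idx 𝒰 s k, μ (E ∩ TT 𝒰 s H.1) := by
  have h1 : E \ Rinf 𝒰 s = ⋃ k, E ∩ SZ 𝒰 s k := by
    have : E \ Rinf 𝒰 s = E ∩ (univ \ Rinf 𝒰 s) := by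
      ext z; simp only [mem_diff, mem_inter_iff, mem_univ, true_and]
    rw [this, compl_Rinf_eq, Set.inter_iUnion]
  rw [h1, measure_iUnion (fun k k' hkk' => Disjoint.mono inter_subset_right inter_subset_right
      (SZ_disjoint hkk')) (fun k => hEm.inter (measurableSet_SZ h𝒰))]
  refine tsum_congr fun k => ?_
  rw [sumA h𝒰 μ (hEm.inter (measurableSet_SZ h𝒰)) inter_subset_right]
  refine tsum_congr fun H => ?_
  congr 1
  have hTTSZ : TT 𝒰 s H.1 ⊆ SZ 𝒰 s k := by
    have := TT_subset_SZ (𝒰 := 𝒰) H.2.1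
    rwa [H.2.2] at this
  ext z
  simp only [mem_inter_iff, and_assoc]
  exact ⟨fun ⟨h1, h2, h3⟩ => ⟨h1, h3⟩, fun ⟨h1, h3⟩ => ⟨h1, hTTSZ h3, h3⟩⟩

end Meas

def pieceT (𝒰 : ℕ → Set (Set K)) (a : Finset ℕ) (c : ℕ → Finset (Set K)) : Set K :=
  ⋂ n ∈ a, TT 𝒰 {n} (c n)

def pieceR (𝒰 : ℕ → Set (Set K)) (b : Finset ℕ) : Set K :=
  ⋂ m ∈ b, Rinf 𝒰 {m}

lemma pieceR_empty : pieceR 𝒰 (∅ : Finset ℕ) = univ := by simp [pieceR]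

lemma pieceR_insert {m : ℕ} {b : Finset ℕ} :
    pieceR 𝒰 (insert m b) = Rinf 𝒰 {m} ∩ pieceR 𝒰 b := by
  simp [pieceR, Set.biInter_insert]

lemma pieceT_insert {m : ℕ} {a : Finset ℕ} {c : ℕ → Finset (Set K)} {H : Finset (Set K)}
    (hm : m ∉ a) :
    pieceT 𝒰 (insert m a) (Function.update c m H) = TT 𝒰 {m} H ∩ pieceT 𝒰 a c := by
  classical
  rw [pieceT, Finset.set_biInter_insert, Function.update_self]
  congr 1
  apply Set.iInter₂_congr
  intro n hn
  rw [Function.update_of_ne (by rintro rfl; exact hm hn)]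

section TwoMeasures

variable [MeasurableSpace K] [BorelSpace K] [T2Space K]
variable (h𝒰 : ∀ n, ∀ U ∈ 𝒰 n, IsOpen U)
variable (μ ν : Measure K) [IsFiniteMeasure μ] [IsFiniteMeasure ν]
  [μ.InnerRegular] [ν.InnerRegular]
variable (hfam : ∀ (s : Finset ℕ) (k : ℕ), ∀ U ∈ fam 𝒰 s k, μ U = ν U)
variable (huniv : μ univ = ν univ)

include h𝒰 hfam

lemma eqRR {s : Finset ℕ} {k : ℕ} : μ (RR 𝒰 s k) = ν (RR 𝒰 s k) :=
  hfam s k _ RR_mem_fam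

lemma eqTT {s : Finset ℕ} {H : Finset (Set K)} (hH : (H : Set (Set K)) ⊆ lev 𝒰 s) :
    μ (TT 𝒰 s H) = ν (TT 𝒰 s H) := by
  rw [TT_eq_diff,
    measure_diff RR_subset_WW ((measurableSet_RR h𝒰).nullMeasurableSet) (measure_ne_top μ _),
    measure_diff RR_subset_WW ((measurableSet_RR h𝒰).nullMeasurableSet) (measure_ne_top ν _),
    hfam s H.card _ (WW_mem_fam hH rfl), eqRR h𝒰 μ ν hfam]

omit hfam in
lemma measurableSet_pieceT {a : Finset ℕ} {c : ℕ → Finset (Set K)}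
    (hc : ∀ n ∈ a, ((c n : Set (Set K)) ⊆ lev 𝒰 {n})) :
    MeasurableSet (pieceT 𝒰 a c) :=
  MeasurableSet.biInter a.countable_toSet fun n hn => measurableSet_TT h𝒰 (hc n hn)

omit hfam in
lemma measurableSet_pieceR {b : Finset ℕ} : MeasurableSet (pieceR 𝒰 b) :=
  MeasurableSet.biInter b.countable_toSet fun m _ => measurableSet_Rinf h𝒰

include huniv

/-- measures agree on all pieces. -/
lemma piece_eq : ∀ (b a : Finset ℕ) (c : ℕ → Finset (Set K)),
    Disjoint a b → (∀ n ∈ a, ((c n : Set (Set K)) ⊆ lev 𝒰 {n})) →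
    μ (pieceT 𝒰 a c ∩ pieceR 𝒰 b) = ν (pieceT 𝒰 a c ∩ pieceR 𝒰 b) := by
  classical
  intro b
  induction b using Finset.induction_on with
  | empty =>
    intro a c _ hc
    rw [pieceR_empty, Set.inter_univ]
    by_cases ha : a = ∅
    · subst ha
      simpa [pieceT] using huniv
    -- main base case: the summation argument at combined level `a`
    have hEfin : ∀ z ∈ pieceT 𝒰 a c, (tr 𝒰 a z).Finite := by
      intro z hz
      apply tr_finite_union
      intro n hn
      have hzn : z ∈ TT 𝒰 {n} (c n) := by
        exact Set.mem_iInter₂.1 hz n hn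
      have := (mem_TT (hc n hn)).1 hzn
      rw [this]
      exact (c n).finite_toSet
    have hdiffeq : pieceT 𝒰 a c \ Rinf 𝒰 a = pieceT 𝒰 a c := by
      ext z
      simp only [mem_diff, Rinf, mem_setOf_eq, and_iff_left_iff_imp]
      intro hz hinf
      exact absurd (hEfin z hz) (fun hf => hinf hf)
    have hμ := sumA2 h𝒰 μ (s := a) (measurableSet_pieceT h𝒰 hc)
    have hν := sumA2 h𝒰 ν (s := a) (measurableSet_pieceT h𝒰 hc)
    rw [hdiffeq] at hμ hν
    rw [hμ, hν]
    refine tsum_congr fun k => tsum_congr fun H => ?_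
    by_cases hC : ∀ n ∈ a, ((H.1 : Set (Set K)) ∩ lev 𝒰 {n}) = ((c n : Set (Set K)))
    · have hsub : TT 𝒰 a H.1 ⊆ pieceT 𝒰 a c := by
        intro z hz
        have htr := (mem_TT H.2.1).1 hz
        apply Set.mem_iInter₂.2
        intro n hn
        refine (mem_TT (hc n hn)).2 ?_
        rw [tr_restrict hn z, htr, hC n hn]
      rw [Set.inter_eq_right.2 hsub]
      exact eqTT h𝒰 μ ν hfam H.2.1
    · have hempty : pieceT 𝒰 a c ∩ TT 𝒰 a H.1 = ∅ := by
        push_neg at hC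
        obtain ⟨n, hn, hCn⟩ := hC
        apply Set.eq_empty_of_forall_notMem
        rintro z ⟨hz1, hz2⟩
        apply hCn
        have htr := (mem_TT H.2.1).1 hz2
        have hzn : z ∈ TT 𝒰 {n} (c n) := Set.mem_iInter₂.1 hz1 n hn
        have h2 := (mem_TT (hc n hn)).1 hzn
        rw [← htr, ← tr_restrict hn z, h2]
      rw [hempty]
      simp
  | @insert m b hm ih =>
    intro a c hdisj hc
    have hma : m ∉ a := by
      intro hma
      exact (Finset.disjoint_left.1 hdisj hma) (Finset.mem_insert_self m b)
    have hdisj' : Disjoint a b :=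
      Finset.disjoint_of_subset_right (Finset.subset_insert m b) hdisj
    set X := pieceT 𝒰 a c ∩ pieceR 𝒰 b with hXdef
    have hXm : MeasurableSet X :=
      (measurableSet_pieceT h𝒰 hc).inter (measurableSet_pieceR h𝒰)
    have hgoal : pieceT 𝒰 a c ∩ pieceR 𝒰 (insert m b) = X ∩ Rinf 𝒰 {m} := by
      rw [pieceR_insert, hXdef]
      ext z
      simp only [mem_inter_iff]
      tauto
    rw [hgoal]
    have hXeq : μ X = ν X := ih a c hdisj' hc
    have hXdiff : μ (X \ Rinf 𝒰 {m}) = ν (X \ Rinf 𝒰 {m}) := by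
      rw [sumA2 h𝒰 μ (s := {m}) hXm, sumA2 h𝒰 ν (s := {m}) hXm]
      refine tsum_congr fun k => tsum_congr fun H => ?_
      have hXT : X ∩ TT 𝒰 {m} H.1 =
          pieceT 𝒰 (insert m a) (Function.update c m H.1) ∩ pieceR 𝒰 b := by
        rw [pieceT_insert hma, hXdef]
        ext z
        simp only [mem_inter_iff]
        tauto
      rw [hXT]
      refine ih (insert m a) (Function.update c m H.1) ?_ ?_
      · rw [Finset.disjoint_left]
        intro n hn
        rcases Finset.mem_insert.1 hn with rfl | hn'
        · exact hm
        · exact fun hnb => (Finset.disjoint_left.1 hdisj hn') (Finset.mem_insert_of_mem hnb)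
      · intro n hn
        rcases Finset.mem_insert.1 hn with rfl | hn'
        · rw [Function.update_self]
          exact H.2.1
        · rw [Function.update_of_ne (by rintro rfl; exact hma hn')]
          exact hc n hn'
    have h1 := measure_inter_add_diff (μ := μ) X (measurableSet_Rinf (𝒰 := 𝒰) h𝒰 (s := ({m} : Finset ℕ)))
    have h2 := measure_inter_add_diff (μ := ν) X (measurableSet_Rinf (𝒰 := 𝒰) h𝒰 (s := ({m} : Finset ℕ)))
    have : μ (X ∩ Rinf 𝒰 {m}) + μ (X \ Rinf 𝒰 {m}) =
        ν (X ∩ Rinf 𝒰 {m}) + μ (X \ Rinf 𝒰 {m}) := by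
      rw [h1, hXdiff, h2, hXeq]
    exact (ENNReal.add_left_inj (measure_ne_top μ _)).1 this

end TwoMeasures

section Separation

lemma mem_tr_iff_lev {n : ℕ} {x : K} {U : Set K} (hU : U ∈ lev 𝒰 {n}) :
    U ∈ tr 𝒰 {n} x ↔ x ∈ U := ⟨fun h => h.2, fun h => ⟨hU, h⟩⟩

lemma x_mem_sInter_tr {s : Finset ℕ} {x : K} (hfx : (tr 𝒰 s x).Finite) :
    x ∈ ⋂₀ ((hfx.toFinset : Finset (Set K)) : Set (Set K)) := by
  refine mem_sInter.2 fun G hG => ?_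
  have : G ∈ tr 𝒰 s x := by
    rwa [Finset.mem_coe, Set.Finite.mem_toFinset] at hG
  exact this.2

lemma sep_half {n : ℕ} {x y : K} (hfx : (tr 𝒰 {n} x).Finite)
    (hU₀ : ∃ U ∈ 𝒰 n, Xor' (x ∈ U) (y ∈ U)) :
    ∃ k, ∃ U ∈ fam 𝒰 {n} k, Xor' (x ∈ U) (y ∈ U) := by
  classical
  obtain ⟨U₀, hU₀n, hXor⟩ := hU₀
  have hU₀lev : U₀ ∈ lev 𝒰 {n} := singleton_mem_lev (Finset.mem_singleton_self n) hU₀n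
  set k := (tr 𝒰 {n} x).ncard with hk
  have htrx_sub : ∀ z : K, z ∈ ⋂₀ ((hfx.toFinset : Finset (Set K)) : Set (Set K)) →
      tr 𝒰 {n} x ⊆ tr 𝒰 {n} z := by
    intro z hz G hG
    refine ⟨hG.1, ?_⟩
    exact mem_sInter.1 hz G (by rwa [Finset.mem_coe, Set.Finite.mem_toFinset])
  have hcard_toFinset : (hfx.toFinset : Finset (Set K)).card = k := by
    rw [hk, Set.ncard_eq_toFinset_card _ hfx]
  have hsubsetlev : ((hfx.toFinset : Finset (Set K)) : Set (Set K)) ⊆ lev 𝒰 {n} := by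
    intro G hG
    have : G ∈ tr 𝒰 {n} x := by rwa [Finset.mem_coe, Set.Finite.mem_toFinset] at hG
    exact this.1
  by_cases hfy : (tr 𝒰 {n} y).Finite
  · set m := (tr 𝒰 {n} y).ncard with hm
    have hcard_toFinsety : (hfy.toFinset : Finset (Set K)).card = m := by
      rw [hm, Set.ncard_eq_toFinset_card _ hfy]
    have hsubsetlevy : ((hfy.toFinset : Finset (Set K)) : Set (Set K)) ⊆ lev 𝒰 {n} := by
      intro G hG
      have : G ∈ tr 𝒰 {n} y := by rwa [Finset.mem_coe, Set.Finite.mem_toFinset] at hG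
      exact this.1
    have htry_sub : ∀ z : K, z ∈ ⋂₀ ((hfy.toFinset : Finset (Set K)) : Set (Set K)) →
        tr 𝒰 {n} y ⊆ tr 𝒰 {n} z := by
      intro z hz G hG
      refine ⟨hG.1, ?_⟩
      exact mem_sInter.1 hz G (by rwa [Finset.mem_coe, Set.Finite.mem_toFinset])
    rcases lt_trichotomy k m with hkm | hkm | hkm
    · -- use y's trace at level m
      refine ⟨m, WW 𝒰 {n} m hfy.toFinset, WW_mem_fam hsubsetlevy hcard_toFinsety, Or.inr ⟨?_, ?_⟩⟩
      · exact Or.inl (x_mem_sInter_tr hfy)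
      · rintro (hx | hx)
        · have := Set.ncard_le_ncard (htry_sub x hx) hfx
          omega
        · rcases mem_RR_iff_card.1 hx with h | h
          · exact h hfx
          · omega
    · -- equal cardinalities
      refine ⟨k, WW 𝒰 {n} k hfx.toFinset, WW_mem_fam hsubsetlev hcard_toFinset, Or.inl ⟨?_, ?_⟩⟩
      · exact Or.inl (x_mem_sInter_tr hfx)
      · rintro (hy | hy)
        · have hsub := htrx_sub y hy
          have : tr 𝒰 {n} x = tr 𝒰 {n} y := by
            apply Set.eq_of_subset_of_ncard_le hsub _ hfy
            omega
          rcases hXor with ⟨hx1, hx2⟩ | ⟨hx1, hx2⟩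
          · exact hx2 (((mem_tr_iff_lev hU₀lev).1) (this ▸ (mem_tr_iff_lev hU₀lev).2 hx1))
          · exact hx2 (((mem_tr_iff_lev hU₀lev).1) (this.symm ▸ (mem_tr_iff_lev hU₀lev).2 hx1))
        · rcases mem_RR_iff_card.1 hy with h | h
          · exact h hfy
          · omega
    · -- use x's trace at level k
      refine ⟨k, WW 𝒰 {n} k hfx.toFinset, WW_mem_fam hsubsetlev hcard_toFinset, Or.inl ⟨?_, ?_⟩⟩
      · exact Or.inl (x_mem_sInter_tr hfx)
      · rintro (hy | hy)
        · have := Set.ncard_le_ncard (htrx_sub y hy) hfy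
          omega
        · rcases mem_RR_iff_card.1 hy with h | h
          · exact h hfy
          · omega
  · -- y has infinite trace
    have hinf : (tr 𝒰 {n} y).Infinite := fun h => hfy h
    obtain ⟨G₀, hG₀⟩ := ((hinf.diff hfx).nonempty)
    obtain ⟨H'', hH''sub, hH''card⟩ := (hinf.diff (Set.finite_singleton G₀)).exists_subset_card_eq k
    have hG₀H'' : G₀ ∉ H'' := by
      intro h
      exact (hH''sub h).2 rfl
    set H' : Finset (Set K) := insert G₀ H'' with hH'
    have hH'card : H'.card = k + 1 := by
      rw [hH', Finset.card_insert_of_notMem hG₀H'', hH''card]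
    have hH'lev : (H' : Set (Set K)) ⊆ lev 𝒰 {n} := by
      intro G hG
      rcases Finset.mem_insert.1 (by exact_mod_cast hG) with rfl | hG'
      · exact hG₀.1.1
      · exact (hH''sub hG').1.1
    refine ⟨k + 1, WW 𝒰 {n} (k + 1) H', WW_mem_fam hH'lev hH'card, Or.inr ⟨?_, ?_⟩⟩
    · exact Or.inr (mem_RR_iff_card.2 (Or.inl hinf))
    · rintro (hx | hx)
      · have : x ∈ G₀ := mem_sInter.1 hx G₀ (by
          exact_mod_cast Finset.mem_insert_self G₀ H'')
        exact hG₀.2 ⟨hG₀.1.1, this⟩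
      · rcases mem_RR_iff_card.1 hx with h | h
        · exact h hfx
        · omega

lemma separation_fam
    (hGru : ∀ x y : K, x ≠ y →
      ∃ n, (∃ U ∈ 𝒰 n, Xor' (x ∈ U) (y ∈ U)) ∧
        ({U | U ∈ 𝒰 n ∧ x ∈ U}.Finite ∨ {U | U ∈ 𝒰 n ∧ y ∈ U}.Finite)) :
    ∀ x y : K, x ≠ y → ∃ (s : Finset ℕ) (k : ℕ), ∃ U ∈ fam 𝒰 s k,
      Xor' (x ∈ U) (y ∈ U) := by
  intro x y hxy
  obtain ⟨n, hXor, hfin⟩ := hGru x y hxy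
  rcases hfin with hfin | hfin
  · obtain ⟨k, U, hU, hx⟩ := sep_half (tr_single_finite hfin) hXor
    exact ⟨{n}, k, U, hU, hx⟩
  · obtain ⟨U₀, hU₀, hXor'⟩ := hXor
    obtain ⟨k, U, hU, hx⟩ := sep_half (tr_single_finite hfin) ⟨U₀, hU₀, hXor'.symm⟩
    exact ⟨{n}, k, U, hU, hx.symm⟩

end Separation

section PiSystem

variable [MeasurableSpace K] [BorelSpace K] [T2Space K]
variable (h𝒰 : ∀ n, ∀ U ∈ 𝒰 n, IsOpen U)
variable (μ ν : Measure K) [IsFiniteMeasure μ] [IsFiniteMeasure ν]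
  [μ.InnerRegular] [ν.InnerRegular]
variable (hfam : ∀ (s : Finset ℕ) (k : ℕ), ∀ U ∈ fam 𝒰 s k, μ U = ν U)
variable (huniv : μ univ = ν univ)

lemma TT_disj_Rinf {n : ℕ} {H : Finset (Set K)} (hH : (H : Set (Set K)) ⊆ lev 𝒰 {n}) :
    TT 𝒰 {n} H ∩ Rinf 𝒰 {n} = ∅ := by
  apply Set.eq_empty_of_forall_notMem
  rintro z ⟨hz1, hz2⟩
  have := (mem_TT hH).1 hz1
  exact absurd (this ▸ H.finite_toSet) (fun h => hz2 h)

include h𝒰 hfam huniv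

lemma inter_S_piece_eq (S : ℕ → Set K)
    (hS : ∀ j, ∃ n, S j = (∅ : Set K) ∨ S j = Rinf 𝒰 {n} ∨
      ∃ H : Finset (Set K), (H : Set (Set K)) ⊆ lev 𝒰 {n} ∧ S j = TT 𝒰 {n} H) :
    ∀ (t : Finset ℕ) (a b : Finset ℕ) (c : ℕ → Finset (Set K)),
      Disjoint a b → (∀ n ∈ a, ((c n : Set (Set K)) ⊆ lev 𝒰 {n})) →
      μ ((⋂ j ∈ t, S j) ∩ (pieceT 𝒰 a c ∩ pieceR 𝒰 b)) =
        ν ((⋂ j ∈ t, S j) ∩ (pieceT 𝒰 a c ∩ pieceR 𝒰 b)) := by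
  classical
  intro t
  induction t using Finset.induction_on with
  | empty =>
    intro a b c hd hc
    simpa using piece_eq h𝒰 μ ν hfam huniv b a c hd hc
  | @insert j t hj ih =>
    intro a b c hd hc
    have hre : (⋂ i ∈ insert j t, S i) ∩ (pieceT 𝒰 a c ∩ pieceR 𝒰 b) =
        (⋂ i ∈ t, S i) ∩ (S j ∩ (pieceT 𝒰 a c ∩ pieceR 𝒰 b)) := by
      rw [Finset.set_biInter_insert]
      ext z
      simp only [mem_inter_iff]
      tauto
    rw [hre]
    obtain ⟨n, hcase⟩ := hS j
    have hpT_sub : ∀ hn : n ∈ a, pieceT 𝒰 a c ⊆ TT 𝒰 {n} (c n) := by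
      intro hn z hz
      exact Set.mem_iInter₂.1 hz n hn
    have hpR_sub : ∀ hn : n ∈ b, pieceR 𝒰 b ⊆ Rinf 𝒰 {n} := by
      intro hn z hz
      exact Set.mem_iInter₂.1 hz n hn
    rcases hcase with h0 | hRi | ⟨H, hHlev, hTTeq⟩
    · rw [h0]
      simp
    · by_cases hnb : n ∈ b
      · have habs : S j ∩ (pieceT 𝒰 a c ∩ pieceR 𝒰 b) = pieceT 𝒰 a c ∩ pieceR 𝒰 b := by
          rw [hRi]
          exact Set.inter_eq_right.2 fun z hz => hpR_sub hnb hz.2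
        rw [habs]
        exact ih a b c hd hc
      · by_cases hna : n ∈ a
        · have habs : S j ∩ (pieceT 𝒰 a c ∩ pieceR 𝒰 b) = ∅ := by
            rw [hRi]
            apply Set.eq_empty_of_forall_notMem
            rintro z ⟨hz1, hz2, hz3⟩
            have hzT := hpT_sub hna hz2
            exact Set.eq_empty_iff_forall_notMem.1 (TT_disj_Rinf (𝒰 := 𝒰) (hc n hna)) z ⟨hzT, hz1⟩
          have hall : (⋂ i ∈ t, S i) ∩ (S j ∩ (pieceT 𝒰 a c ∩ pieceR 𝒰 b)) = ∅ :=
            Set.subset_empty_iff.1 (habs ▸ Set.inter_subset_right)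
          rw [hall]
          simp only [measure_empty]
        · have habs : S j ∩ (pieceT 𝒰 a c ∩ pieceR 𝒰 b) =
              pieceT 𝒰 a c ∩ pieceR 𝒰 (insert n b) := by
            rw [hRi, pieceR_insert]
            ext z
            simp only [mem_inter_iff]
            tauto
          rw [habs]
          refine ih a (insert n b) c ?_ hc
          rw [Finset.disjoint_right]
          intro m hm
          rcases Finset.mem_insert.1 hm with rfl | hm'
          · exact hna
          · exact fun hma => (Finset.disjoint_left.1 hd hma) hm'
    · by_cases hna : n ∈ a
      · by_cases hHc : TT 𝒰 {n} H = TT 𝒰 {n} (c n)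
        · have habs : S j ∩ (pieceT 𝒰 a c ∩ pieceR 𝒰 b) = pieceT 𝒰 a c ∩ pieceR 𝒰 b := by
            rw [hTTeq, hHc]
            exact Set.inter_eq_right.2 fun z hz => hpT_sub hna hz.1
          rw [habs]
          exact ih a b c hd hc
        · have hHne : H ≠ c n := fun h => hHc (by rw [h])
          have habs : S j ∩ (pieceT 𝒰 a c ∩ pieceR 𝒰 b) = ∅ := by
            rw [hTTeq]
            apply Set.eq_empty_of_forall_notMem
            rintro z ⟨hz1, hz2, hz3⟩
            have hzT := hpT_sub hna hz2
            exact Set.disjoint_left.1 (TT_disjoint hHlev (hc n hna) hHne) hz1 hzT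
          have hall : (⋂ i ∈ t, S i) ∩ (S j ∩ (pieceT 𝒰 a c ∩ pieceR 𝒰 b)) = ∅ :=
            Set.subset_empty_iff.1 (habs ▸ Set.inter_subset_right)
          rw [hall]
          simp only [measure_empty]
      · by_cases hnb : n ∈ b
        · have habs : S j ∩ (pieceT 𝒰 a c ∩ pieceR 𝒰 b) = ∅ := by
            rw [hTTeq]
            apply Set.eq_empty_of_forall_notMem
            rintro z ⟨hz1, hz2, hz3⟩
            have hzR := hpR_sub hnb hz3
            exact Set.eq_empty_iff_forall_notMem.1 (TT_disj_Rinf (𝒰 := 𝒰) hHlev) z ⟨hz1, hzR⟩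
          have hall : (⋂ i ∈ t, S i) ∩ (S j ∩ (pieceT 𝒰 a c ∩ pieceR 𝒰 b)) = ∅ :=
            Set.subset_empty_iff.1 (habs ▸ Set.inter_subset_right)
          rw [hall]
          simp only [measure_empty]
        · have habs : S j ∩ (pieceT 𝒰 a c ∩ pieceR 𝒰 b) =
              pieceT 𝒰 (insert n a) (Function.update c n H) ∩ pieceR 𝒰 b := by
            rw [hTTeq, pieceT_insert hna]
            ext z
            simp only [mem_inter_iff]
            tauto
          rw [habs]
          refine ih (insert n a) b (Function.update c n H) ?_ ?_
          · rw [Finset.disjoint_left]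
            intro m hm
            rcases Finset.mem_insert.1 hm with rfl | hm'
            · exact hnb
            · exact Finset.disjoint_left.1 hd hm'
          · intro m hm
            rcases Finset.mem_insert.1 hm with rfl | hm'
            · rw [Function.update_self]
              exact hHlev
            · rw [Function.update_of_ne (by rintro rfl; exact hna hm')]
              exact hc m hm'

lemma inter_S_eq (S : ℕ → Set K)
    (hS : ∀ j, ∃ n, S j = (∅ : Set K) ∨ S j = Rinf 𝒰 {n} ∨
      ∃ H : Finset (Set K), (H : Set (Set K)) ⊆ lev 𝒰 {n} ∧ S j = TT 𝒰 {n} H) :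
    ∀ t : Finset ℕ, μ (⋂ j ∈ t, S j) = ν (⋂ j ∈ t, S j) := by
  intro t
  have := inter_S_piece_eq h𝒰 μ ν hfam huniv S hS t ∅ ∅ (fun _ => ∅)
    (Finset.disjoint_empty_left ∅) (by simp)
  simpa [pieceR_empty, pieceT] using this

end PiSystem

section Endgame

variable [MeasurableSpace K] [BorelSpace K] [T2Space K]
variable (h𝒰 : ∀ n, ∀ U ∈ 𝒰 n, IsOpen U)
variable (μ ν : Measure K) [IsFiniteMeasure μ] [IsFiniteMeasure ν]
  [μ.InnerRegular] [ν.InnerRegular]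

lemma exists_compact_diff_le_one {X : Set K} (hX : MeasurableSet X) {ε : ℝ≥0∞} (hε : ε ≠ 0) :
    ∃ C, C ⊆ X ∧ IsCompact C ∧ μ (X \ C) ≤ ε := by
  by_cases h0 : μ X = 0
  · refine ⟨∅, empty_subset X, isCompact_empty, ?_⟩
    rw [Set.diff_empty, h0]
    exact zero_le
  · have hlt : μ X - ε < μ X := ENNReal.sub_lt_self (measure_ne_top μ X) h0 hε
    obtain ⟨C, hCX, hCc, hCgt⟩ := hX.exists_lt_isCompact hlt
    refine ⟨C, hCX, hCc, ?_⟩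
    rw [measure_diff hCX hCc.isClosed.measurableSet.nullMeasurableSet (measure_ne_top μ C)]
    refine tsub_le_iff_right.2 ?_
    calc μ X ≤ (μ X - ε) + ε := le_tsub_add
    _ ≤ μ C + ε := by
        exact add_le_add_left hCgt.le ε
    _ = ε + μ C := add_comm _ _

lemma exists_compact_diff_le {X : Set K} (hX : MeasurableSet X) {ε : ℝ≥0∞} (hε : ε ≠ 0) :
    ∃ C, C ⊆ X ∧ IsCompact C ∧ μ (X \ C) ≤ ε ∧ ν (X \ C) ≤ ε := by
  obtain ⟨C₁, h1X, h1c, h1e⟩ := exists_compact_diff_le_one μ hX hε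
  obtain ⟨C₂, h2X, h2c, h2e⟩ := exists_compact_diff_le_one ν hX hε
  refine ⟨C₁ ∪ C₂, union_subset h1X h2X, h1c.union h2c, ?_, ?_⟩
  · exact le_trans (measure_mono (Set.diff_subset_diff_right subset_union_left)) h1e
  · exact le_trans (measure_mono (Set.diff_subset_diff_right subset_union_right)) h2e

/-- the positive fibers at a level. -/
def PosH (𝒰 : ℕ → Set (Set K)) (μ ν : Measure K) (n : ℕ) : Set (Finset (Set K)) :=
  {H | ((H : Set (Set K)) ⊆ lev 𝒰 {n}) ∧
    (0 < μ (TT 𝒰 {n} H) ∨ 0 < ν (TT 𝒰 {n} H))}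

include h𝒰 in
lemma countable_PosH (n : ℕ) : (PosH 𝒰 μ ν n).Countable := by
  classical
  set As : Finset (Set K) → Set K := fun H =>
    if ((H : Set (Set K)) ⊆ lev 𝒰 {n}) then TT 𝒰 {n} H else ∅ with hAs
  have hmeas : ∀ H, MeasurableSet (As H) := by
    intro H
    rw [hAs]
    by_cases h : ((H : Set (Set K)) ⊆ lev 𝒰 {n})
    · simpa [h] using measurableSet_TT h𝒰 h
    · simp [h]
  have hdisj : Pairwise (Function.onFun Disjoint As) := by
    intro H H' hne
    rw [hAs]
    simp only [Function.onFun]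
    by_cases h : ((H : Set (Set K)) ⊆ lev 𝒰 {n})
    · by_cases h' : ((H' : Set (Set K)) ⊆ lev 𝒰 {n})
      · simpa [h, h'] using TT_disjoint h h' hne
      · simp [h, h']
    · simp [h]
  have hsub : PosH 𝒰 μ ν n ⊆
      {H | 0 < μ (As H)} ∪ {H | 0 < ν (As H)} := by
    rintro H ⟨hHlev, hpos⟩
    rcases hpos with h | h
    · exact Or.inl (by simpa [hAs, hHlev] using h)
    · exact Or.inr (by simpa [hAs, hHlev] using h)
  refine Set.Countable.mono hsub (Set.Countable.union ?_ ?_)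
  · exact Measure.countable_meas_pos_of_disjoint_iUnion (μ := μ) hmeas hdisj
  · exact Measure.countable_meas_pos_of_disjoint_iUnion (μ := ν) hmeas hdisj

/-- the good part of level n. -/
def GoodU (𝒰 : ℕ → Set (Set K)) (μ ν : Measure K) (n : ℕ) : Set K :=
  Rinf 𝒰 {n} ∪ ⋃₀ ((fun H : Finset (Set K) => TT 𝒰 {n} H) '' PosH 𝒰 μ ν n)

include h𝒰 in
lemma measurableSet_GoodU (n : ℕ) : MeasurableSet (GoodU 𝒰 μ ν n) := by
  refine (measurableSet_Rinf h𝒰).union ?_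
  refine MeasurableSet.sUnion ((countable_PosH h𝒰 μ ν n).image _) ?_
  rintro A ⟨H, hH, rfl⟩
  exact measurableSet_TT h𝒰 hH.1

include h𝒰 in
lemma null_GoodU_compl (n : ℕ) :
    μ (univ \ GoodU 𝒰 μ ν n) = 0 ∧ ν (univ \ GoodU 𝒰 μ ν n) = 0 := by
  have hEm : MeasurableSet (univ \ GoodU 𝒰 μ ν n) :=
    MeasurableSet.univ.diff (measurableSet_GoodU h𝒰 μ ν n)
  have hdiffeq : (univ \ GoodU 𝒰 μ ν n) \ Rinf 𝒰 {n} = univ \ GoodU 𝒰 μ ν n := by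
    ext z
    simp only [mem_diff, mem_univ, true_and, GoodU, mem_union, and_iff_left_iff_imp]
    intro hz hzR
    exact hz (Or.inl hzR)
  have hterm : ∀ (ξ : Measure K), (ξ = μ ∨ ξ = ν) → ∀ (k : ℕ),
      ∀ (H : Idx 𝒰 ({n} : Finset ℕ) k),
      ξ ((univ \ GoodU 𝒰 μ ν n) ∩ TT 𝒰 {n} H.1) = 0 := by
    intro ξ hξ k H
    by_cases hpos : (0 < μ (TT 𝒰 {n} H.1) ∨ 0 < ν (TT 𝒰 {n} H.1))
    · have hsub : TT 𝒰 {n} H.1 ⊆ GoodU 𝒰 μ ν n := by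
        intro z hz
        exact Or.inr ⟨TT 𝒰 {n} H.1, ⟨H.1, ⟨H.2.1, hpos⟩, rfl⟩, hz⟩
      have hempty : (univ \ GoodU 𝒰 μ ν n) ∩ TT 𝒰 {n} H.1 = ∅ := by
        apply Set.eq_empty_of_forall_notMem
        rintro z ⟨⟨-, hz1⟩, hz2⟩
        exact hz1 (hsub hz2)
      rw [hempty, measure_empty]
    · push_neg at hpos
      have hμ0' : μ (TT 𝒰 {n} H.1) = 0 := nonpos_iff_eq_zero.1 hpos.1
      have hν0' : ν (TT 𝒰 {n} H.1) = 0 := nonpos_iff_eq_zero.1 hpos.2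
      rcases hξ with rfl | rfl
      · exact le_antisymm (le_trans (measure_mono inter_subset_right) hμ0'.le) (zero_le)
      · exact le_antisymm (le_trans (measure_mono inter_subset_right) hν0'.le) (zero_le)
  constructor
  · rw [← hdiffeq, sumA2 h𝒰 μ hEm]
    exact (ENNReal.tsum_eq_zero).2 fun k => (ENNReal.tsum_eq_zero).2 fun H =>
      hterm μ (Or.inl rfl) k H
  · rw [← hdiffeq, sumA2 h𝒰 ν hEm]
    exact (ENNReal.tsum_eq_zero).2 fun k => (ENNReal.tsum_eq_zero).2 fun H =>
      hterm ν (Or.inr rfl) k H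

include h𝒰 in
lemma compact_le [CompactSpace K]
    (hfam : ∀ (s : Finset ℕ) (k : ℕ), ∀ U ∈ fam 𝒰 s k, μ U = ν U)
    (huniv : μ univ = ν univ)
    (hGru : ∀ x y : K, x ≠ y →
      ∃ n, (∃ U ∈ 𝒰 n, Xor' (x ∈ U) (y ∈ U)) ∧
        ({U | U ∈ 𝒰 n ∧ x ∈ U}.Finite ∨ {U | U ∈ 𝒰 n ∧ y ∈ U}.Finite))
    {C : Set K} (hC : IsCompact C) : μ C ≤ ν C := by
  classical
  refine ENNReal.le_of_forall_pos_le_add fun ε0 hε0 _ => ?_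
  set δ : ℝ≥0∞ := (ε0 : ℝ≥0∞) / 8 with hδdef
  have hδ0 : δ ≠ 0 := by
    rw [hδdef]
    exact ENNReal.div_ne_zero.2 ⟨ENNReal.coe_ne_zero.2 hε0.ne', by norm_num⟩
  -- enumerate the good pieces of each level
  have h𝔖 : ∀ n : ℕ, ∃ f : ℕ → Set K,
      (((fun H : Finset (Set K) => TT 𝒰 {n} H) '' PosH 𝒰 μ ν n) ∪
        {Rinf 𝒰 {n}, (∅ : Set K)}) = range f := by
    intro n
    refine Set.Countable.exists_eq_range ?_ ?_
    · exact Set.Countable.union ((countable_PosH h𝒰 μ ν n).image _)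
        ((Set.countable_singleton _).insert _)
    · exact ⟨∅, Or.inr (by simp)⟩
  choose en hen using h𝔖
  set Sf : ℕ → Set K := fun j => en (Nat.unpair j).1 (Nat.unpair j).2 with hSfdef
  have hSfspec : ∀ j, Sf j ∈ (((fun H : Finset (Set K) =>
      TT 𝒰 {(Nat.unpair j).1} H) '' PosH 𝒰 μ ν (Nat.unpair j).1) ∪
      {Rinf 𝒰 {(Nat.unpair j).1}, (∅ : Set K)}) := by
    intro j
    rw [hen (Nat.unpair j).1]
    exact mem_range_self _
  have hSS : ∀ j, ∃ n, Sf j = (∅ : Set K) ∨ Sf j = Rinf 𝒰 {n} ∨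
      ∃ H : Finset (Set K), (H : Set (Set K)) ⊆ lev 𝒰 {n} ∧ Sf j = TT 𝒰 {n} H := by
    intro j
    refine ⟨(Nat.unpair j).1, ?_⟩
    rcases hSfspec j with ⟨H, hH, heq⟩ | h
    · exact Or.inr (Or.inr ⟨H, hH.1, heq.symm⟩)
    · rcases h with h | h
      · exact Or.inr (Or.inl h)
      · exact Or.inl h
  have hSfm : ∀ j, MeasurableSet (Sf j) := by
    intro j
    obtain ⟨n, h⟩ := hSS j
    rcases h with h | h | ⟨H, hH, h⟩
    · rw [h]; exact MeasurableSet.empty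
    · rw [h]; exact measurableSet_Rinf h𝒰
    · rw [h]; exact measurableSet_TT h𝒰 hH
  have hcov : ∀ (n : ℕ) (A : Set K), A ∈ (((fun H : Finset (Set K) => TT 𝒰 {n} H) ''
      PosH 𝒰 μ ν n) ∪ {Rinf 𝒰 {n}, (∅ : Set K)}) → ∃ j, Sf j = A := by
    intro n A hA
    rw [hen n] at hA
    obtain ⟨i, hi⟩ := hA
    refine ⟨Nat.pair n i, ?_⟩
    rw [hSfdef]
    simp only [Nat.unpair_pair]
    exact hi
  -- the null set
  set N : Set K := ⋃ n, (univ \ GoodU 𝒰 μ ν n) with hNdef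
  have hNm : MeasurableSet N :=
    MeasurableSet.iUnion fun n => MeasurableSet.univ.diff (measurableSet_GoodU h𝒰 μ ν n)
  have hNμ : μ N = 0 := measure_iUnion_null fun n => (null_GoodU_compl h𝒰 μ ν n).1
  have hNν : ν N = 0 := measure_iUnion_null fun n => (null_GoodU_compl h𝒰 μ ν n).2
  -- separation by the countable family
  have hsep2 : ∀ x y : K, x ∉ N → x ≠ y → ∃ j, x ∈ Sf j ∧ y ∉ Sf j := by
    intro x y hxN hxy
    obtain ⟨n, ⟨U₀, hU₀n, hXor⟩, hfin⟩ := hGru x y hxy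
    have hxGood : x ∈ GoodU 𝒰 μ ν n := by
      by_contra h
      exact hxN (mem_iUnion.2 ⟨n, ⟨mem_univ x, h⟩⟩)
    by_cases hfx : (tr 𝒰 {n} x).Finite
    · have hxT : ∃ H ∈ PosH 𝒰 μ ν n, x ∈ TT 𝒰 {n} H := by
        rcases hxGood with h | ⟨A, ⟨H, hH, rfl⟩, hxA⟩
        · exact absurd hfx (fun hf => h hf)
        · exact ⟨H, hH, hxA⟩
      obtain ⟨H, hHpos, hxT⟩ := hxT
      obtain ⟨j, hj⟩ := hcov n (TT 𝒰 {n} H) (Or.inl ⟨H, hHpos, rfl⟩)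
      refine ⟨j, by rw [hj]; exact hxT, ?_⟩
      rw [hj]
      intro hyT
      have htrx := (mem_TT hHpos.1).1 hxT
      have htry := (mem_TT hHpos.1).1 hyT
      have heq : tr 𝒰 {n} x = tr 𝒰 {n} y := by rw [htrx, htry]
      have hU₀lev : U₀ ∈ lev 𝒰 {n} := singleton_mem_lev (Finset.mem_singleton_self n) hU₀n
      rcases hXor with ⟨hx1, hx2⟩ | ⟨hx1, hx2⟩
      · exact hx2 ((mem_tr_iff_lev hU₀lev).1 (heq ▸ (mem_tr_iff_lev hU₀lev).2 hx1))
      · exact hx2 ((mem_tr_iff_lev hU₀lev).1 (heq.symm ▸ (mem_tr_iff_lev hU₀lev).2 hx1))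
    · have hyfin : (tr 𝒰 {n} y).Finite := by
        rcases hfin with h | h
        · exact absurd (tr_single_finite h) hfx
        · exact tr_single_finite h
      obtain ⟨j, hj⟩ := hcov n (Rinf 𝒰 {n}) (Or.inr (by simp))
      refine ⟨j, by rw [hj]; exact fun hf => hfx hf, ?_⟩
      rw [hj]
      intro hy
      exact hy hyfin
  -- Lusin-style compact sets
  obtain ⟨T0, hT0sub, hT0c, hT0μ, hT0ν⟩ :=
    exists_compact_diff_le μ ν (MeasurableSet.univ.diff hNm) hδ0
  have h2inv : (2⁻¹ : ℝ≥0∞) ≠ 0 := ENNReal.inv_ne_zero.2 (by norm_num)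
  have hABex : ∀ j : ℕ, ∃ P : Set K × Set K,
      (P.1 ⊆ Sf j ∧ IsCompact P.1 ∧ μ (Sf j \ P.1) ≤ δ * 2⁻¹ ^ (j + 1) ∧
        ν (Sf j \ P.1) ≤ δ * 2⁻¹ ^ (j + 1)) ∧
      (P.2 ⊆ (Sf j)ᶜ ∧ IsCompact P.2 ∧ μ ((Sf j)ᶜ \ P.2) ≤ δ * 2⁻¹ ^ (j + 1) ∧
        ν ((Sf j)ᶜ \ P.2) ≤ δ * 2⁻¹ ^ (j + 1)) := by
    intro j
    have hd : δ * 2⁻¹ ^ (j + 1) ≠ 0 := mul_ne_zero hδ0 (pow_ne_zero _ h2inv)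
    obtain ⟨A, h1, h2, h3, h4⟩ := exists_compact_diff_le μ ν (hSfm j) hd
    obtain ⟨B, g1, g2, g3, g4⟩ := exists_compact_diff_le μ ν (hSfm j).compl hd
    exact ⟨(A, B), ⟨h1, h2, h3, h4⟩, ⟨g1, g2, g3, g4⟩⟩
  choose AB hA hB using hABex
  set Ac : ℕ → Set K := fun j => (AB j).1 with hAcdef
  set Bc : ℕ → Set K := fun j => (AB j).2 with hBcdef
  set Kc : Set K := T0 ∩ ⋂ j, (Ac j ∪ Bc j) with hKcdef
  have hKcc : IsCompact Kc := hT0c.inter_right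
    (isClosed_iInter fun j => ((hA j).2.1.isClosed.union (hB j).2.1.isClosed))
  have hKcN : ∀ z ∈ Kc, z ∉ N := fun z hz => (hT0sub hz.1).2
  -- geometric series bound
  have hgeom : ∑' j : ℕ, δ * 2⁻¹ ^ (j + 1) = δ := by
    rw [ENNReal.tsum_mul_left, ENNReal.tsum_geometric_add_one, ENNReal.one_sub_inv_two,
      inv_inv, ENNReal.inv_mul_cancel (by norm_num) (by norm_num), mul_one]
  -- complement bound
  have hbound : ∀ ξ : Measure K, ξ N = 0 →
      ξ ((univ \ N) \ T0) ≤ δ → (∀ j, ξ (Sf j \ Ac j) ≤ δ * 2⁻¹ ^ (j + 1)) →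
      (∀ j, ξ ((Sf j)ᶜ \ Bc j) ≤ δ * 2⁻¹ ^ (j + 1)) → ξ (univ \ Kc) ≤ 3 * δ := by
    intro ξ hξN hξT hξA hξB
    have hsub : univ \ Kc ⊆ (N ∪ ((univ \ N) \ T0)) ∪
        ⋃ j, ((Sf j \ Ac j) ∪ ((Sf j)ᶜ \ Bc j)) := by
      rintro z ⟨-, hz⟩
      by_cases hzT : z ∈ T0
      · have hzA : ¬ ∀ j, z ∈ Ac j ∪ Bc j := by
          intro hall
          exact hz ⟨hzT, mem_iInter.2 hall⟩
        push_neg at hzA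
        obtain ⟨j, hj⟩ := hzA
        refine Or.inr (mem_iUnion.2 ⟨j, ?_⟩)
        by_cases hzS : z ∈ Sf j
        · exact Or.inl ⟨hzS, fun h => hj (Or.inl h)⟩
        · exact Or.inr ⟨hzS, fun h => hj (Or.inr h)⟩
      · by_cases hzN : z ∈ N
        · exact Or.inl (Or.inl hzN)
        · exact Or.inl (Or.inr ⟨⟨mem_univ z, hzN⟩, hzT⟩)
    calc ξ (univ \ Kc) ≤ ξ ((N ∪ ((univ \ N) \ T0)) ∪
        ⋃ j, ((Sf j \ Ac j) ∪ ((Sf j)ᶜ \ Bc j))) := measure_mono hsub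
    _ ≤ (ξ N + ξ ((univ \ N) \ T0)) +
        ∑' j, ξ ((Sf j \ Ac j) ∪ ((Sf j)ᶜ \ Bc j)) :=
      le_trans (measure_union_le _ _) (add_le_add (measure_union_le _ _) (measure_iUnion_le _))
    _ ≤ (0 + δ) + ∑' j, (δ * 2⁻¹ ^ (j + 1) + δ * 2⁻¹ ^ (j + 1)) := by
      refine add_le_add (add_le_add hξN.le hξT) (ENNReal.tsum_le_tsum fun j => ?_)
      exact le_trans (measure_union_le _ _) (add_le_add (hξA j) (hξB j))
    _ = δ + (δ + δ) := by rw [zero_add, ENNReal.tsum_add, hgeom]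
    _ = 3 * δ := by ring
  have hμKc : μ (univ \ Kc) ≤ 3 * δ := hbound μ hNμ hT0μ (fun j => (hA j).2.2.1)
    (fun j => (hB j).2.2.1)
  have hνKc : ν (univ \ Kc) ≤ 3 * δ := hbound ν hNν hT0ν (fun j => (hA j).2.2.2)
    (fun j => (hB j).2.2.2)
  -- compact separation inside Kc
  have hcover : ∀ y ∈ Kc, y ∉ C → ∃ t : Finset ℕ,
      (C ∩ Kc ⊆ ⋃ jj ∈ t, Sf jj) ∧ y ∉ ⋃ jj ∈ t, Sf jj := by
    intro y hyK hyC
    have hsel : ∀ x : ↥(C ∩ Kc), ∃ j, (x : K) ∈ Sf j ∧ y ∉ Sf j := by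
      rintro ⟨x, hxC, hxK⟩
      refine hsep2 x y (hKcN x hxK) ?_
      rintro rfl
      exact hyC hxC
    choose jx hjx using hsel
    have hopen : ∀ i : ↥(C ∩ Kc), IsOpen ((Bc (jx i))ᶜ) :=
      fun i => (hB (jx i)).2.1.isClosed.isOpen_compl
    have hcv : C ∩ Kc ⊆ ⋃ i : ↥(C ∩ Kc), (Bc (jx i))ᶜ := by
      intro z hz
      refine mem_iUnion.2 ⟨⟨z, hz⟩, ?_⟩
      intro hzB
      exact ((hB (jx ⟨z, hz⟩)).1 hzB) ((hjx ⟨z, hz⟩).1)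
    obtain ⟨t', ht'⟩ := (hC.inter_right hKcc.isClosed).elim_finite_subcover _ hopen hcv
    refine ⟨t'.image jx, ?_, ?_⟩
    · intro z hz
      obtain ⟨i, hit, hzB⟩ := mem_iUnion₂.1 (ht' hz)
      refine mem_iUnion₂.2 ⟨jx i, Finset.mem_image_of_mem jx hit, ?_⟩
      have hzab : z ∈ Ac (jx i) ∪ Bc (jx i) := mem_iInter.1 hz.2.2 (jx i)
      rcases hzab with h | h
      · exact (hA (jx i)).1 h
      · exact absurd h hzB
    · intro hy
      obtain ⟨jj, hjj, hyS⟩ := mem_iUnion₂.1 hy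
      obtain ⟨i, hit, rfl⟩ := Finset.mem_image.1 hjj
      exact (hjx i).2 hyS
  -- the determined set D
  set 𝔐 : Set (Finset ℕ) := {t | C ∩ Kc ⊆ ⋃ jj ∈ t, Sf jj} with h𝔐def
  set D : Set K := ⋂ t ∈ 𝔐, ⋃ jj ∈ t, Sf jj with hDdef
  have hCKD : C ∩ Kc ⊆ D := fun z hz => mem_iInter₂.2 fun t ht => ht hz
  have hDKC : D ∩ Kc ⊆ C := by
    rintro z ⟨hzD, hzK⟩
    by_contra hzC
    obtain ⟨t, ht1, ht2⟩ := hcover z hzK hzC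
    exact ht2 (mem_iInter₂.1 hzD t ht1)
  -- Dynkin argument
  set 𝒮π : Set (Set K) := {A : Set K | ∃ t : Finset ℕ, A = ⋂ jj ∈ t, Sf jj} with h𝒮πdef
  have hπ : IsPiSystem 𝒮π := by
    rintro A1 ⟨t, rfl⟩ A2 ⟨t', rfl⟩ -
    refine ⟨t ∪ t', ?_⟩
    ext z
    simp only [mem_inter_iff, mem_iInter, Finset.mem_union]
    constructor
    · rintro ⟨h1, h2⟩ jj hjj
      rcases hjj with h | h
      exacts [h1 jj h, h2 jj h]
    · intro h
      exact ⟨fun jj hjj => h jj (Or.inl hjj), fun jj hjj => h jj (Or.inr hjj)⟩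
  have hgen : ∀ A : Set K,
      MeasurableSet[MeasurableSpace.generateFrom 𝒮π] A → MeasurableSet A ∧ μ A = ν A := by
    intro A hA
    refine MeasurableSpace.induction_on_inter (m := MeasurableSpace.generateFrom 𝒮π)
      (C := fun A _ => MeasurableSet A ∧ μ A = ν A) rfl hπ ?_ ?_ ?_ ?_ A hA
    · exact ⟨MeasurableSet.empty, by simp⟩
    · rintro A' ⟨t, rfl⟩
      exact ⟨MeasurableSet.biInter t.countable_toSet (fun j _ => hSfm j),
        inter_S_eq h𝒰 μ ν hfam huniv Sf hSS t⟩
    · rintro A' - ⟨hA'm, hA'eq⟩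
      refine ⟨hA'm.compl, ?_⟩
      rw [measure_compl hA'm (measure_ne_top μ A'), measure_compl hA'm (measure_ne_top ν A'),
        huniv, hA'eq]
    · rintro f hdisj - hP
      refine ⟨MeasurableSet.iUnion fun i => (hP i).1, ?_⟩
      rw [measure_iUnion hdisj (fun i => (hP i).1), measure_iUnion hdisj (fun i => (hP i).1)]
      exact tsum_congr fun i => (hP i).2
  have hDgen : MeasurableSet[MeasurableSpace.generateFrom 𝒮π] D := by
    refine MeasurableSet.biInter (Set.to_countable 𝔐) fun t ht => ?_
    refine MeasurableSet.biUnion t.countable_toSet fun j _ => ?_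
    refine MeasurableSpace.measurableSet_generateFrom ⟨({j} : Finset ℕ), ?_⟩
    simp
  obtain ⟨hDm, hDeq⟩ := hgen D hDgen
  -- final chain
  have h1 : μ C ≤ μ D + 3 * δ := by
    calc μ C ≤ μ ((C ∩ Kc) ∪ (univ \ Kc)) := measure_mono (by
      intro z hz
      by_cases h : z ∈ Kc
      · exact Or.inl ⟨hz, h⟩
      · exact Or.inr ⟨mem_univ z, h⟩)
    _ ≤ μ (C ∩ Kc) + μ (univ \ Kc) := measure_union_le _ _
    _ ≤ μ D + 3 * δ := add_le_add (measure_mono hCKD) hμKc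
  have h2 : ν D ≤ ν C + 3 * δ := by
    calc ν D ≤ ν ((D ∩ Kc) ∪ (univ \ Kc)) := measure_mono (by
      intro z hz
      by_cases h : z ∈ Kc
      · exact Or.inl ⟨hz, h⟩
      · exact Or.inr ⟨mem_univ z, h⟩)
    _ ≤ ν (D ∩ Kc) + ν (univ \ Kc) := measure_union_le _ _
    _ ≤ ν C + 3 * δ := add_le_add (measure_mono hDKC) hνKc
  have h6 : 6 * δ ≤ (ε0 : ℝ≥0∞) := by
    have h8 : (8 : ℝ≥0∞) * δ = (ε0 : ℝ≥0∞) := by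
      rw [hδdef]
      exact ENNReal.mul_div_cancel' (by norm_num) (by norm_num)
    calc (6 : ℝ≥0∞) * δ ≤ 8 * δ := mul_le_mul_left (by norm_num) δ
    _ = (ε0 : ℝ≥0∞) := h8
  calc μ C ≤ μ D + 3 * δ := h1
  _ = ν D + 3 * δ := by rw [hDeq]
  _ ≤ (ν C + 3 * δ) + 3 * δ := add_le_add_left h2 _
  _ = ν C + 6 * δ := by ring
  _ ≤ ν C + (ε0 : ℝ≥0∞) := add_le_add_right h6 _

end Endgame

end Gru

/-- On a Gruenhage compact Hausdorff space, there is a separating system of open sets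
`Rₙ`, `𝒰ₙ` as in Proposition `gruenhage_equiv (iii)` which moreover determines finite
Radon measures: two finite inner-regular Borel measures with the same total mass agreeing
on each `U ∈ ⋃ₙ 𝒰ₙ` are equal. -/
theorem gruenhage_measure_determining_families
    {K : Type*} [TopologicalSpace K] [CompactSpace K] [T2Space K]
    [MeasurableSpace K] [BorelSpace K]
    (h : IsGruenhage K) :
    ∃ (R : ℕ → Set K) (𝒰 : ℕ → Set (Set K)),
      (∀ n, IsOpen (R n)) ∧
      (∀ n, ∀ U ∈ 𝒰 n, IsOpen U) ∧
      (∀ n, ∀ U ∈ 𝒰 n, R n ⊆ U) ∧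
      (∀ n, ∀ U ∈ 𝒰 n, ∀ V ∈ 𝒰 n, U ≠ V → U ∩ V = R n) ∧
      (∀ x y : K, x ≠ y → ∃ n, ∃ U ∈ 𝒰 n, Xor' (x ∈ U) (y ∈ U)) ∧
      (∀ μ ν : Measure K, IsFiniteMeasure μ → IsFiniteMeasure ν →
        μ.InnerRegular → ν.InnerRegular →
        μ Set.univ = ν Set.univ → (∀ n, ∀ U ∈ 𝒰 n, μ U = ν U) → μ = ν) := by
  classical
  obtain ⟨𝒰, h𝒰o, hGru⟩ := h
  have hGru' : ∀ x y : K, x ≠ y →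
      ∃ n, (∃ U ∈ 𝒰 n, Xor' (x ∈ U) (y ∈ U)) ∧
        ({U | U ∈ 𝒰 n ∧ x ∈ U}.Finite ∨ {U | U ∈ 𝒰 n ∧ y ∈ U}.Finite) := hGru
  set dec : ℕ → Finset ℕ × ℕ :=
    fun m => ((Encodable.decode m : Option (Finset ℕ × ℕ)).getD (∅, 0)) with hdec
  have hsurj : ∀ p : Finset ℕ × ℕ, ∃ m : ℕ, dec m = p := by
    intro p
    refine ⟨Encodable.encode p, ?_⟩
    rw [hdec]
    simp [Encodable.encodek]
  refine ⟨fun m => Gru.RR 𝒰 (dec m).1 (dec m).2, fun m => Gru.fam 𝒰 (dec m).1 (dec m).2,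
    ?_, ?_, ?_, ?_, ?_, ?_⟩
  · intro m
    exact Gru.isOpen_RR h𝒰o
  · intro m U hU
    rcases hU with rfl | ⟨H, hH, hc, rfl⟩
    · exact Gru.isOpen_RR h𝒰o
    · exact Gru.isOpen_WW h𝒰o hH
  · intro m U hU
    rcases hU with rfl | ⟨H, hH, hc, rfl⟩
    · exact subset_rfl
    · exact Gru.RR_subset_WW
  · intro m U hU V hV hne
    exact Gru.fam_inter hU hV hne
  · intro x y hxy
    obtain ⟨s, k, U, hU, hXor⟩ := Gru.separation_fam hGru' x y hxy
    obtain ⟨m, hm⟩ := hsurj (s, k)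
    refine ⟨m, U, ?_, hXor⟩
    show U ∈ Gru.fam 𝒰 (dec m).1 (dec m).2
    rw [hm]
    exact hU
  · intro μ ν hμf hνf hμr hνr huniv hval
    haveI := hμf
    haveI := hνf
    haveI := hμr
    haveI := hνr
    have hfam : ∀ (s : Finset ℕ) (k : ℕ), ∀ U ∈ Gru.fam 𝒰 s k, μ U = ν U := by
      intro s k U hU
      obtain ⟨m, hm⟩ := hsurj (s, k)
      refine hval m U ?_
      show U ∈ Gru.fam 𝒰 (dec m).1 (dec m).2
      rw [hm]
      exact hU
    have hcpq : ∀ {C : Set K}, IsCompact C → μ C = ν C := by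
      intro C hC
      refine le_antisymm (Gru.compact_le h𝒰o μ ν hfam huniv hGru' hC)
        (Gru.compact_le h𝒰o ν μ (fun s k U hU => (hfam s k U hU).symm) huniv.symm hGru' hC)
    refine Measure.ext fun E hE => ?_
    apply le_antisymm
    · by_contra hlt
      push_neg at hlt
      obtain ⟨C, hCE, hCc, hCgt⟩ := hE.exists_lt_isCompact hlt
      rw [hcpq hCc] at hCgt
      exact absurd (measure_mono hCE) (not_le.2 hCgt)
    · by_contra hlt
      push_neg at hlt
      obtain ⟨C, hCE, hCc, hCgt⟩ := hE.exists_lt_isCompact hlt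
      rw [← hcpq hCc] at hCgt
      exact absurd (measure_mono hCE) (not_le.2 hCgt)
end

section
/- Let X be a real Banach space such that there exists an equivalent norm on X whose dual norm on X* is strictly convex. Then X* equipped with the weak-* topology has property (*): there exist families 𝒰_q of weak-* open subsets of X* indexed by a countable set, such that for all distinct f, g ∈ X* there exists an index q with (i) at least one of f, g belonging to ⋃𝒰_q, and (ii) every U ∈ 𝒰_q containing at most one of f and g. -/
open NormedSpace

/-- A topological space has *property (*)* if there is a sequence `(𝒰 n)` of families of
open sets such that for all distinct `x, y` there is `n` with (i) at least one of `x, y`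
in `⋃₀ 𝒰 n`, and (ii) no `U ∈ 𝒰 n` containing both `x` and `y`. -/
def HasPropertyStar (X : Type*) [TopologicalSpace X] : Prop :=
  ∃ 𝒰 : ℕ → Set (Set X),
    (∀ n, ∀ U ∈ 𝒰 n, IsOpen U) ∧
    ∀ x y : X, x ≠ y →
      ∃ n, (x ∈ ⋃₀ 𝒰 n ∨ y ∈ ⋃₀ 𝒰 n) ∧ ∀ U ∈ 𝒰 n, ¬(x ∈ U ∧ y ∈ U)

/-- The dual norm on `X*` induced by a norm `p` on `X`: `N(f) = sup { f x : p x ≤ 1 }`. -/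
noncomputable def dualNormOf {X : Type*} [NormedAddCommGroup X] [NormedSpace ℝ X]
    (p : X → ℝ) (f : StrongDual ℝ X) : ℝ :=
  ⨆ x : {x : X // p x ≤ 1}, f x

/-- `p` is a norm on `X` equivalent to the given norm. -/
def IsEquivNormOn (X : Type*) [NormedAddCommGroup X] [NormedSpace ℝ X] (p : X → ℝ) : Prop :=
  (∀ x y : X, p (x + y) ≤ p x + p y) ∧
  (∀ (c : ℝ) (x : X), p (c • x) = |c| * p x) ∧
  ∃ a b : ℝ, 0 < a ∧ 0 < b ∧ ∀ x : X, a * ‖x‖ ≤ p x ∧ p x ≤ b * ‖x‖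

/-- `X*` admits an equivalent strictly convex dual norm. -/
def HasEquivStrictlyConvexDualNorm (X : Type*) [NormedAddCommGroup X] [NormedSpace ℝ X] :
    Prop :=
  ∃ p : X → ℝ, IsEquivNormOn X p ∧
    ∀ f g : StrongDual ℝ X,
      dualNormOf p f = dualNormOf p g →
      dualNormOf p f = dualNormOf p ((2⁻¹ : ℝ) • (f + g)) →
      f = g

/-- If `X*` admits an equivalent strictly convex dual norm, then `X*` with the weak-*
topology has property (*). -/
theorem strictlyConvex_dualNorm_hasPropertyStar
    {X : Type*} [NormedAddCommGroup X] [NormedSpace ℝ X] [CompleteSpace X]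
    (h : HasEquivStrictlyConvexDualNorm X) :
    HasPropertyStar (WeakDual ℝ X) := by
  classical
  obtain ⟨p, ⟨hadd, hsmul, a, b, ha, hb, hab⟩, hsc⟩ := h
  set N : WeakDual ℝ X → ℝ := fun h => dualNormOf p h with hNdef
  have hp0 : p 0 = 0 := by
    have := hsmul 0 0
    simpa using this
  have hpnn : ∀ x : X, 0 ≤ p x := fun x =>
    le_trans (by positivity) (hab x).1
  haveI hne : Nonempty {x : X // p x ≤ 1} := ⟨⟨0, by rw [hp0]; norm_num⟩⟩
  have hbdd : ∀ f : WeakDual ℝ X,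
      BddAbove (Set.range fun x : {x : X // p x ≤ 1} => f x) := by
    intro f
    let f' : X →L[ℝ] ℝ := f
    refine ⟨‖f'‖ * a⁻¹, ?_⟩
    rintro _ ⟨⟨x, hx⟩, rfl⟩
    have h1 : a * ‖x‖ ≤ 1 := le_trans (hab x).1 hx
    have h2 : ‖x‖ ≤ a⁻¹ := by
      rw [← one_div, le_div_iff₀ ha]; nlinarith
    calc f x ≤ ‖f' x‖ := le_abs_self _
      _ ≤ ‖f'‖ * ‖x‖ := f'.le_opNorm x
      _ ≤ ‖f'‖ * a⁻¹ := mul_le_mul_of_nonneg_left h2 (norm_nonneg _)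
  have le_N : ∀ (f : WeakDual ℝ X) (x : X), p x ≤ 1 → f x ≤ N f := by
    intro f x hx
    exact le_ciSup (hbdd f) ⟨x, hx⟩
  have N_nonneg : ∀ f : WeakDual ℝ X, 0 ≤ N f := by
    intro f
    have := le_N f 0 (by rw [hp0]; norm_num)
    simpa using this
  have N_le_of : ∀ (f : WeakDual ℝ X) (c : ℝ), (∀ x : X, p x ≤ 1 → f x ≤ c) → N f ≤ c := by
    intro f c hc
    exact ciSup_le fun x => hc x x.2
  have lt_N : ∀ (f : WeakDual ℝ X) (c : ℝ), c < N f → ∃ x : X, p x ≤ 1 ∧ c < f x := by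
    intro f c hc
    obtain ⟨⟨x, hx⟩, hlt⟩ := exists_lt_of_lt_ciSup hc
    exact ⟨x, hx, hlt⟩
  have key : ∀ (f : WeakDual ℝ X) (x : X), f x ≤ N f * p x := by
    intro f x
    rcases eq_or_lt_of_le (hpnn x) with h0 | h0
    · have h0' : p x = 0 := h0.symm
      have hx0 : x = 0 := by
        have h1 := (hab x).1
        have hn : ‖x‖ ≤ 0 := by nlinarith
        simpa using le_antisymm hn (norm_nonneg x)
      rw [hx0, hp0, mul_zero]
      simp
    · have hmem : p ((p x)⁻¹ • x) ≤ 1 := by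
        rw [hsmul, abs_of_pos (inv_pos.mpr h0), inv_mul_cancel₀ (ne_of_gt h0)]
      have hle := le_N f _ hmem
      have happ : f ((p x)⁻¹ • x) = (p x)⁻¹ * f x := by
        simp [map_smul]
      rw [happ] at hle
      have hle2 := mul_le_mul_of_nonneg_right hle (le_of_lt h0)
      calc f x = (p x)⁻¹ * f x * p x := by field_simp
        _ ≤ N f * p x := hle2
  have N_mid : ∀ f g : WeakDual ℝ X,
      N ((2⁻¹ : ℝ) • (f + g)) ≤ 2⁻¹ * (N f + N g) := by
    intro f g
    refine N_le_of _ _ fun x hx => ?_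
    have happ : ((2⁻¹ : ℝ) • (f + g)) x = 2⁻¹ * (f x + g x) := rfl
    rw [happ]
    have h1 := le_N f x hx
    have h2 := le_N g x hx
    nlinarith
  have open_half : ∀ (x : X) (c : ℝ), IsOpen {h : WeakDual ℝ X | c < h x} :=
    fun x c => isOpen_lt continuous_const (WeakDual.eval_continuous x)
  have open_N : ∀ q : ℝ, IsOpen {h : WeakDual ℝ X | q < N h} := by
    intro q
    have hset : {h : WeakDual ℝ X | q < N h}
        = ⋃ x : {x : X // p x ≤ 1}, {h : WeakDual ℝ X | q < h x} := by
      ext h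
      simp only [Set.mem_setOf_eq, Set.mem_iUnion]
      constructor
      · intro hq
        obtain ⟨x, hx, hlt⟩ := lt_N h q hq
        exact ⟨⟨x, hx⟩, hlt⟩
      · rintro ⟨⟨x, hx⟩, hlt⟩
        exact lt_of_lt_of_le hlt (le_N h x hx)
    rw [hset]
    exact isOpen_iUnion fun x => open_half x q
  -- the families
  let F : ℚ ⊕ ℚ × ℚ → Set (Set (WeakDual ℝ X)) := fun i =>
    match i with
    | .inl q => {{h : WeakDual ℝ X | (q : ℝ) < N h}}
    | .inr (r, q) => {S | ∃ x : X,
        (∀ h : WeakDual ℝ X, N h ≤ (q : ℝ) → h x ≤ (r : ℝ)) ∧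
        S = {h : WeakDual ℝ X | (r : ℝ) < h x}}
  let e : (ℚ ⊕ ℚ × ℚ) ≃ ℕ := Denumerable.eqv _
  refine ⟨fun n => F (e.symm n), ?_, ?_⟩
  · intro n U hU
    change U ∈ F (e.symm n) at hU
    rcases hi : e.symm n with q | ⟨r, q⟩
    · rw [hi] at hU
      have hU' : U = {h : WeakDual ℝ X | (q : ℝ) < N h} := hU
      rw [hU']; exact open_N q
    · rw [hi] at hU
      obtain ⟨x, -, rfl⟩ : ∃ x : X,
          (∀ h : WeakDual ℝ X, N h ≤ (q : ℝ) → h x ≤ (r : ℝ)) ∧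
          U = {h : WeakDual ℝ X | (r : ℝ) < h x} := hU
      exact open_half x r
  · intro f g hfg
    by_cases hNfg : N f = N g
    · -- equal norms: use strict convexity
      set m : WeakDual ℝ X := (2⁻¹ : ℝ) • (f + g) with hm
      have hmle : N m ≤ N f := by
        refine le_trans (N_mid f g) ?_
        rw [← hNfg]; linarith
      have hmlt : N m < N f := by
        rcases lt_or_eq_of_le hmle with h' | h'
        · exact h'
        · exact absurd (hsc f g hNfg h'.symm) hfg
      obtain ⟨q, hq1, hq2⟩ := exists_rat_btwn hmlt
      have hq0 : (0 : ℝ) < q := lt_of_le_of_lt (N_nonneg m) hq1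
      obtain ⟨x, hx1, hx2⟩ := lt_N f q hq2
      obtain ⟨r, hr1, hr2⟩ := exists_rat_btwn hx2
      refine ⟨e (.inr (r, q)), ?_, ?_⟩
      · left
        show f ∈ ⋃₀ F (e.symm (e (.inr (r, q))))
        rw [Equiv.symm_apply_apply]
        refine ⟨{h : WeakDual ℝ X | (r : ℝ) < h x}, ⟨x, ?_, rfl⟩, hr2⟩
        intro h hh
        have h1 : N h * p x ≤ (q : ℝ) * p x :=
          mul_le_mul_of_nonneg_right hh (hpnn x)
        have h2 : (q : ℝ) * p x ≤ (q : ℝ) * 1 :=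
          mul_le_mul_of_nonneg_left hx1 (le_of_lt hq0)
        calc h x ≤ N h * p x := key h x
          _ ≤ (q : ℝ) * p x := h1
          _ ≤ q := by rw [mul_one] at h2; exact h2
          _ ≤ r := le_of_lt hr1
      · intro U hU
        change U ∈ F (e.symm (e (Sum.inr (r, q)))) at hU
        rw [Equiv.symm_apply_apply] at hU
        obtain ⟨y, hy, rfl⟩ : ∃ y : X,
            (∀ h : WeakDual ℝ X, N h ≤ (q : ℝ) → h y ≤ (r : ℝ)) ∧
            U = {h : WeakDual ℝ X | (r : ℝ) < h y} := hU
        rintro ⟨hfU, hgU⟩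
        have hmy : m y ≤ (r : ℝ) := hy m (le_of_lt hq1)
        have happ : m y = 2⁻¹ * (f y + g y) := rfl
        rw [happ] at hmy
        simp only [Set.mem_setOf_eq] at hfU hgU
        nlinarith
    · -- different norms
      rcases lt_or_gt_of_ne hNfg with hlt | hlt
      · obtain ⟨q, hq1, hq2⟩ := exists_rat_btwn hlt
        refine ⟨e (.inl q), ?_, ?_⟩
        · right
          show g ∈ ⋃₀ F (e.symm (e (.inl q)))
          rw [Equiv.symm_apply_apply]
          exact ⟨_, rfl, hq2⟩
        · intro U hU
          change U ∈ F (e.symm (e (Sum.inl q))) at hU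
          rw [Equiv.symm_apply_apply] at hU
          have hU' : U = {h : WeakDual ℝ X | (q : ℝ) < N h} := hU
          rintro ⟨hfU, -⟩
          rw [hU'] at hfU
          exact absurd hfU (not_lt.mpr (le_of_lt hq1))
      · obtain ⟨q, hq1, hq2⟩ := exists_rat_btwn hlt
        refine ⟨e (.inl q), ?_, ?_⟩
        · left
          show f ∈ ⋃₀ F (e.symm (e (.inl q)))
          rw [Equiv.symm_apply_apply]
          exact ⟨_, rfl, hq2⟩
        · intro U hU
          change U ∈ F (e.symm (e (Sum.inl q))) at hU
          rw [Equiv.symm_apply_apply] at hU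
          have hU' : U = {h : WeakDual ℝ X | (q : ℝ) < N h} := hU
          rintro ⟨-, hgU⟩
          rw [hU'] at hgU
          exact absurd hgU (not_lt.mpr (le_of_lt hq1))
end
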